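/- Let t(q) = log q + 2·Σ_{n≥1} ((2n-1)!/(n!)²) q^n. Then exp(t(q) - log q) = exp(2 Σ_{n≥1} ((2n-1)!/(n!)²) q^n) equals 1/(1/2 + (1/2)√(1-4q))², i.e. the mirror map of O ⊕ O(-2) → P¹ satisfies e^t = q / ((1 + √(1-4q))/2)² as an identity of formal power series in q (after expanding √(1-4q) = Σ binomial series). -/

import Mathlib

open PowerSeries

/-- Formal composition `f ∘ g` of power series. -/
noncomputable def pcomp (f g : PowerSeries ℚ) : PowerSeries ℚ :=
  PowerSeries.mk fun n =>
    ∑ k ∈ Finset.range (n + 1), PowerSeries.coeff k f * PowerSeries.coeff n (g ^ k)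

/-- `2 Σ_{n≥1} ((2n-1)!/(n!)²) qⁿ`, i.e. `t(q) - log q` for the mirror map of `O⊕O(-2)→P¹`. -/
noncomputable def gSer : PowerSeries ℚ :=
  PowerSeries.mk fun n =>
    if n = 0 then 0 else 2 * ((2 * n - 1).factorial : ℚ) / ((n.factorial : ℚ)) ^ 2

/-- The formal binomial series `√(1-4q) = Σ_{n≥0} binom(1/2,n) (-4q)ⁿ`. -/
noncomputable def sqrtSer : PowerSeries ℚ :=
  PowerSeries.mk fun n =>
    (-4 : ℚ) ^ n * (∏ i ∈ Finset.range n, ((1 : ℚ) / 2 - i)) / (n.factorial : ℚ)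

/-- `Σ binom(2n,n) qⁿ`, which is `1/√(1-4q)`. -/
noncomputable def bSer : PowerSeries ℚ :=
  PowerSeries.mk fun n => ((2 * n).factorial : ℚ) / ((n.factorial : ℚ)) ^ 2

lemma C_four : (C 4 : ℚ⟦X⟧) = 4 := by simp [map_ofNat]

lemma D_four : d⁄dX ℚ (4 : ℚ⟦X⟧) = 0 := by rw [← map_ofNat (C (R := ℚ)) 4, derivative_C]

lemma D_one_sub : d⁄dX ℚ (1 - 4 * X : ℚ⟦X⟧) = -4 := by
  rw [map_sub, Derivation.leibniz]
  simp [smul_eq_mul, D_four]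

lemma coeff_pow_eq_zero {g : ℚ⟦X⟧} (hg : constantCoeff g = 0) :
    ∀ j b : ℕ, b < j → coeff b (g ^ j) = 0 := by
  intro j
  induction j with
  | zero => intro b hb; omega
  | succ j ih =>
    intro b hb
    rw [pow_succ, coeff_mul]
    apply Finset.sum_eq_zero
    rintro ⟨a, c⟩ hac
    rw [Finset.HasAntidiagonal.mem_antidiagonal] at hac
    by_cases hc : c = 0
    · subst hc
      rw [coeff_zero_eq_constantCoeff_apply, hg, mul_zero]
    · rw [ih a (by omega), zero_mul]

/-- Chain rule for composition with exp. -/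
lemma deriv_pcomp_exp {g : ℚ⟦X⟧} (hg : constantCoeff g = 0) :
    d⁄dX ℚ (pcomp (PowerSeries.exp ℚ) g) =
      d⁄dX ℚ g * pcomp (PowerSeries.exp ℚ) g := by
  ext n
  rw [coeff_derivative]
  have hexp : ∀ j : ℕ, coeff (j+1) (PowerSeries.exp ℚ) * (j+1)
      = coeff j (PowerSeries.exp ℚ) := by
    intro j
    simp only [coeff_exp, Algebra.algebraMap_self_apply, Nat.factorial_succ]
    have h1 : (j.factorial : ℚ) ≠ 0 := Nat.cast_ne_zero.mpr j.factorial_ne_zero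
    push_cast
    field_simp
  have hD : ∀ k : ℕ, coeff (n+1) (g^k) * (n+1)
      = (k : ℚ) * coeff n (d⁄dX ℚ g * g ^ (k-1)) := by
    intro k
    rw [← coeff_derivative, Derivation.leibniz_pow, smul_eq_mul,
      map_nsmul, nsmul_eq_mul, mul_comm (g ^ (k-1)) (d⁄dX ℚ g)]
  have hL : coeff (n+1) (pcomp (PowerSeries.exp ℚ) g) * (n+1)
      = ∑ j ∈ Finset.range (n+1),
          coeff j (PowerSeries.exp ℚ) * coeff n (d⁄dX ℚ g * g ^ j) := by
    rw [pcomp, coeff_mk, Finset.sum_mul]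
    have : ∀ k ∈ Finset.range (n+2),
        coeff k (PowerSeries.exp ℚ) * coeff (n+1) (g^k) * (n+1)
        = coeff k (PowerSeries.exp ℚ) * ((k:ℚ) * coeff n (d⁄dX ℚ g * g ^ (k-1))) := by
      intro k _
      rw [mul_assoc, hD k]
    rw [Finset.sum_congr rfl this, Finset.sum_range_succ']
    simp only [Nat.cast_zero, zero_mul, mul_zero, add_zero, Nat.add_sub_cancel]
    refine Finset.sum_congr rfl fun j _ => ?_
    rw [← mul_assoc]
    have h := hexp j
    push_cast at h ⊢
    rw [h]
  rw [hL, coeff_mul]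
  have hswap : ∀ p ∈ Finset.HasAntidiagonal.antidiagonal n,
      coeff p.1 (d⁄dX ℚ g) * coeff p.2 (pcomp (PowerSeries.exp ℚ) g)
      = ∑ k ∈ Finset.range (n+1),
          coeff p.1 (d⁄dX ℚ g) * (coeff k (PowerSeries.exp ℚ) * coeff p.2 (g^k)) := by
    rintro ⟨a, b⟩ hab
    rw [Finset.HasAntidiagonal.mem_antidiagonal] at hab
    rw [pcomp, coeff_mk, Finset.mul_sum]
    apply Finset.sum_subset
    · exact Finset.range_subset_range.mpr (by omega)
    · intro k hk hk'
      simp only [Finset.mem_range] at hk hk'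
      rw [coeff_pow_eq_zero hg k b (by omega), mul_zero, mul_zero]
  rw [Finset.sum_congr rfl hswap, Finset.sum_comm]
  refine Finset.sum_congr rfl fun k _ => ?_
  rw [coeff_mul, Finset.mul_sum]
  refine Finset.sum_congr rfl fun p _ => ?_
  ring

/-- Uniqueness for the ODE `(1-4X) R' = c R`, `R₀ = 0`. -/
lemma ode_unique (c : ℚ) {R : ℚ⟦X⟧}
    (h : (1 - 4 * X) * d⁄dX ℚ R = C c * R)
    (h0 : coeff 0 R = 0) : R = 0 := by
  have key : ∀ n, coeff n R = 0 := by
    intro n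
    induction n with
    | zero => exact h0
    | succ n ih =>
      have h' := congrArg (coeff n) h
      rw [coeff_C_mul, ih, mul_zero, sub_mul, one_mul, map_sub,
        show (4 : ℚ⟦X⟧) * X * d⁄dX ℚ R = C 4 * (X * d⁄dX ℚ R) by
          rw [← mul_assoc, C_four],
        coeff_C_mul] at h'
      have hX : coeff n (X * d⁄dX ℚ R) = 0 := by
        cases n with
        | zero => simp
        | succ m =>
          rw [coeff_succ_X_mul, coeff_derivative, ih, zero_mul]
      rw [hX, mul_zero, sub_zero, coeff_derivative] at h'
      have hne : ((n : ℚ) + 1) ≠ 0 := by positivity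
      exact (mul_eq_zero.mp h').resolve_right hne
  ext n
  rw [key n, map_zero]

lemma coeff_one_sub_four_X_mul (f : ℚ⟦X⟧) (n : ℕ) :
    coeff (n+1) ((1 - 4 * X) * f) = coeff (n+1) f - 4 * coeff n f := by
  rw [sub_mul, one_mul, map_sub,
    show (4 : ℚ⟦X⟧) * X * f = C 4 * (X * f) by rw [← mul_assoc, C_four],
    coeff_C_mul, coeff_succ_X_mul]

lemma coeff_zero_one_sub_four_X_mul (f : ℚ⟦X⟧) :
    coeff 0 ((1 - 4 * X) * f) = coeff 0 f := by
  rw [sub_mul, one_mul, map_sub,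
    show (4 : ℚ⟦X⟧) * X * f = C 4 * (X * f) by rw [← mul_assoc, C_four],
    coeff_C_mul]
  simp

lemma sqrt_rec (m : ℕ) :
    ((m : ℚ) + 1) * coeff (m+1) sqrtSer = (4 * m - 2) * coeff m sqrtSer := by
  simp only [sqrtSer, coeff_mk, Finset.prod_range_succ, Nat.factorial_succ, pow_succ]
  have h1 : (m.factorial : ℚ) ≠ 0 := Nat.cast_ne_zero.mpr m.factorial_ne_zero
  push_cast
  field_simp
  ring

lemma sqrt_ode : (1 - 4 * X) * d⁄dX ℚ sqrtSer = C (-2) * sqrtSer := by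
  ext n
  rw [coeff_C_mul]
  cases n with
  | zero =>
    rw [coeff_zero_one_sub_four_X_mul, coeff_derivative]
    have := sqrt_rec 0
    push_cast at this ⊢
    linarith [this]
  | succ n =>
    rw [coeff_one_sub_four_X_mul, coeff_derivative, coeff_derivative]
    have := sqrt_rec (n+1)
    push_cast at this ⊢
    linarith [this]

lemma b_rec (m : ℕ) :
    ((m : ℚ) + 1) * coeff (m+1) bSer = (4 * m + 2) * coeff m bSer := by
  simp only [bSer, coeff_mk]
  have h2m1 : 2 * (m + 1) = (2 * m + 1) + 1 := by ring
  rw [h2m1, Nat.factorial_succ, Nat.factorial_succ, Nat.factorial_succ]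
  have h1 : (m.factorial : ℚ) ≠ 0 := Nat.cast_ne_zero.mpr m.factorial_ne_zero
  have h2 : ((m : ℚ) + 1) ≠ 0 := by positivity
  push_cast
  field_simp
  ring

lemma b_ode : (1 - 4 * X) * d⁄dX ℚ bSer = C 2 * bSer := by
  ext n
  rw [coeff_C_mul]
  cases n with
  | zero =>
    rw [coeff_zero_one_sub_four_X_mul, coeff_derivative]
    have := b_rec 0
    push_cast at this ⊢
    linarith [this]
  | succ n =>
    rw [coeff_one_sub_four_X_mul, coeff_derivative, coeff_derivative]
    have := b_rec (n+1)
    push_cast at this ⊢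
    linarith [this]

lemma coeff_zero_sqrt : coeff 0 sqrtSer = 1 := by
  simp [sqrtSer]

lemma coeff_zero_b : coeff 0 bSer = 1 := by
  simp [bSer]

lemma constSqrt : constantCoeff sqrtSer = 1 := by
  rw [← coeff_zero_eq_constantCoeff_apply]; exact coeff_zero_sqrt

lemma constB : constantCoeff bSer = 1 := by
  rw [← coeff_zero_eq_constantCoeff_apply]; exact coeff_zero_b

lemma sqrt_sq : sqrtSer ^ 2 = 1 - 4 * X := by
  have h : sqrtSer ^ 2 - (1 - 4 * X) = 0 := by
    apply ode_unique (-4)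
    · have hd : d⁄dX ℚ (sqrtSer ^ 2) = 2 * (sqrtSer * d⁄dX ℚ sqrtSer) := by
        rw [Derivation.leibniz_pow]
        simp only [smul_eq_mul, nsmul_eq_mul, pow_one, Nat.cast_ofNat]
        ring
      rw [map_sub, hd, D_one_sub]
      have key : (1 - 4 * X) * (2 * (sqrtSer * d⁄dX ℚ sqrtSer) - -4)
          = 2 * sqrtSer * ((1 - 4 * X) * d⁄dX ℚ sqrtSer) + 4 * (1 - 4*X) := by ring
      rw [key, sqrt_ode]
      have hC2 : (C (-2) : ℚ⟦X⟧) = -2 := by simp [map_ofNat]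
      have hC4 : (C (-4) : ℚ⟦X⟧) = -4 := by simp [map_ofNat]
      rw [hC2, hC4]
      ring
    · rw [coeff_zero_eq_constantCoeff_apply, map_sub, map_pow, map_sub, map_one, map_mul,
        constSqrt, constantCoeff_X]
      norm_num
  exact sub_eq_zero.mp h

lemma bS_one : bSer * sqrtSer = 1 := by
  have h : bSer * sqrtSer - 1 = 0 := by
    apply ode_unique 0
    · have hd : d⁄dX ℚ (bSer * sqrtSer) = bSer * d⁄dX ℚ sqrtSer + sqrtSer * d⁄dX ℚ bSer := by
        rw [Derivation.leibniz]
        simp [smul_eq_mul]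
      rw [map_sub, hd, Derivation.map_one_eq_zero, sub_zero]
      have key : (1 - 4 * X) * (bSer * d⁄dX ℚ sqrtSer + sqrtSer * d⁄dX ℚ bSer)
          = bSer * ((1 - 4 * X) * d⁄dX ℚ sqrtSer) + sqrtSer * ((1 - 4 * X) * d⁄dX ℚ bSer) := by
        ring
      rw [key, sqrt_ode, b_ode]
      have hC2 : (C (-2) : ℚ⟦X⟧) = -2 := by simp [map_ofNat]
      have hC2' : (C 2 : ℚ⟦X⟧) = 2 := by simp [map_ofNat]
      rw [hC2, hC2', map_zero]
      ring
    · rw [coeff_zero_eq_constantCoeff_apply, map_sub, map_mul, constSqrt, constB, map_one]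
      norm_num
  exact sub_eq_zero.mp h

lemma const_gSer : constantCoeff gSer = 0 := by
  rw [← coeff_zero_eq_constantCoeff_apply]
  simp [gSer]

lemma X_D_g : X * d⁄dX ℚ gSer = bSer - 1 := by
  ext n
  cases n with
  | zero => simp [bSer, coeff_zero_eq_constantCoeff_apply]
  | succ n =>
    rw [coeff_succ_X_mul, coeff_derivative, map_sub]
    rw [show coeff (n+1) (1 : ℚ⟦X⟧) = 0 by simp, sub_zero]
    simp only [gSer, bSer, coeff_mk, Nat.add_eq_zero, and_false, if_false, Nat.add_one_ne_zero, ↓reduceIte]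
    have h1 : 2 * (n + 1) - 1 = 2 * n + 1 := by omega
    have h2 : 2 * (n + 1) = (2 * n + 1) + 1 := by omega
    have hfac : ((2 * n + 1) + 1).factorial = ((2 * n + 1) + 1) * (2 * n + 1).factorial :=
      Nat.factorial_succ _
    rw [h1, h2, hfac]
    have h3 : (((n+1).factorial : ℚ)) ≠ 0 := Nat.cast_ne_zero.mpr (n+1).factorial_ne_zero
    push_cast
    field_simp
    ring

/-- The mirror map of `O ⊕ O(-2) → P¹` satisfies
`exp(t - log q) = 1/((1+√(1-4q))/2)²`, i.e. `exp(g) · (1+√(1-4q))² = 4`. -/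
theorem mirror_map_algebraic :
    pcomp (PowerSeries.exp ℚ) gSer * (1 + sqrtSer) ^ 2 = 4 := by
  set F := pcomp (PowerSeries.exp ℚ) gSer with hF
  set S := sqrtSer with hSdef
  have hDF : d⁄dX ℚ F = d⁄dX ℚ gSer * F := deriv_pcomp_exp const_gSer
  have hSDS : S * d⁄dX ℚ S = -2 := by
    have h := congrArg (d⁄dX ℚ) sqrt_sq
    rw [D_one_sub, Derivation.leibniz_pow] at h
    simp only [smul_eq_mul, nsmul_eq_mul, pow_one, Nat.cast_ofNat] at h
    have h2 : (2 : ℚ⟦X⟧) * (S * d⁄dX ℚ S) = 2 * (-2) := by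
      rw [show (2:ℚ⟦X⟧) * (-2) = -4 by ring]
      rw [← h]; ring
    have h2ne : (2 : ℚ⟦X⟧) ≠ 0 := by
      intro hc
      have := congrArg (constantCoeff) hc
      simp [map_ofNat] at this
    exact mul_left_cancel₀ h2ne h2
  have hXS : (X : ℚ⟦X⟧) * S ≠ 0 := by
    apply mul_ne_zero X_ne_zero
    intro hS0
    have := coeff_zero_sqrt
    rw [← hSdef, hS0, map_zero] at this
    norm_num at this
  have hKey : d⁄dX ℚ gSer * (1 + S) + 2 * d⁄dX ℚ S = 0 := by
    apply mul_left_cancel₀ hXS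
    rw [mul_zero]
    have hXg := X_D_g
    have hBS := bS_one
    have hS2 := sqrt_sq
    linear_combination (S * (1 + S)) * hXg + (2 * (X:ℚ⟦X⟧)) * hSDS + (1 + S) * hBS - hS2
  have hDG : d⁄dX ℚ (F * (1 + S)^2) = 0 := by
    rw [Derivation.leibniz, Derivation.leibniz_pow]
    simp only [smul_eq_mul, nsmul_eq_mul, pow_one, Nat.cast_ofNat, map_add,
      Derivation.map_one_eq_zero, zero_add]
    linear_combination (F * (1 + S)) * hKey + ((1 + S)^2) * hDF
  have hF0 : constantCoeff F = 1 := by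
    rw [hF, ← coeff_zero_eq_constantCoeff_apply, pcomp, coeff_mk]
    simp [Finset.sum_range_one, coeff_exp]
  have hG0 : coeff 0 (F * (1 + S)^2) = 4 := by
    rw [coeff_zero_eq_constantCoeff_apply, map_mul, map_pow, map_add, map_one, hF0, hSdef,
      constSqrt]
    norm_num
  ext n
  cases n with
  | zero =>
    rw [hG0, ← C_four, coeff_C]
    norm_num
  | succ n =>
    have h := congrArg (coeff n) hDG
    rw [coeff_derivative, map_zero] at h
    have hne : ((n : ℚ) + 1) ≠ 0 := by positivity
    have : coeff (n+1) (F * (1 + S)^2) = 0 := by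
      rcases mul_eq_zero.mp h with h' | h'
      · exact h'
      · exact absurd h' hne
    rw [this, ← C_four, coeff_C]
    simp
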